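/- Let θ, γ, c be as in the context. Then γ is additive: γ(λ + λ') = γ(λ) + γ(λ') for all λ, λ' ∈ Λ. -/

import Mathlib

open Complex

theorem gamma_additive
    (ω₁ ω₂ : ℂ) (hindep : LinearIndependent ℝ ![ω₁, ω₂])
    (Λ : AddSubgroup ℂ) (hΛ : ∀ z : ℂ, z ∈ Λ ↔ ∃ a b : ℤ, z = a * ω₁ + b * ω₂)
    (θ γ c : ℂ → ℂ)
    (U : Set ℂ) (hUopen : IsOpen U) (hUne : U.Nonempty)
    (hθU : ∀ z ∈ U, θ z ≠ 0)
    (hc : ∀ l ∈ Λ, c l = 1 ∨ c l = -1)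
    (hfe : ∀ z : ℂ, ∀ l ∈ Λ, θ (z + l) = c l * Complex.exp (γ l * (z + l / 2)) * θ z) :
    ∀ l ∈ Λ, ∀ l' ∈ Λ, γ (l + l') = γ l + γ l' := by
  intro l hl l' hl'
  have hll' : l + l' ∈ Λ := add_mem hl hl'
  have hcne : ∀ m ∈ Λ, c m ≠ 0 := by
    intro m hm
    rcases hc m hm with h | h <;> simp [h]
  set d : ℂ := γ (l + l') - γ l - γ l' with hd
  set e : ℂ := γ (l + l') * ((l + l') / 2) - γ l' * (l + l' / 2) - γ l * (l / 2) with he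
  set κ : ℂ := c l * c l' / c (l + l') with hκ
  have key : ∀ z ∈ U, Complex.exp (d * z + e) = κ := by
    intro z hz
    have h1 := hfe z (l + l') hll'
    have h2 := hfe (z + l) l' hl'
    have h3 := hfe z l hl
    rw [h3] at h2
    have hrw : z + (l + l') = z + l + l' := by ring
    rw [hrw, h2] at h1
    have hθ := hθU z hz
    have h4 : c (l + l') * Complex.exp (γ (l + l') * (z + (l + l') / 2)) =
        c l' * Complex.exp (γ l' * (z + l + l' / 2)) *
          (c l * Complex.exp (γ l * (z + l / 2))) := by
      apply mul_right_cancel₀ hθ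
      linear_combination -h1
    have hsplit : d * z + e = γ (l + l') * (z + (l + l') / 2)
        - γ l' * (z + l + l' / 2) - γ l * (z + l / 2) := by
      rw [hd, he]; ring
    rw [hsplit, Complex.exp_sub, Complex.exp_sub, hκ, div_div,
      div_eq_div_iff (mul_ne_zero (Complex.exp_ne_zero _) (Complex.exp_ne_zero _))
        (hcne _ hll')]
    linear_combination h4
  obtain ⟨z₀, hz₀⟩ := hUne
  have hev : (fun z => Complex.exp (d * z + e)) =ᶠ[nhds z₀] fun _ => κ := by
    filter_upwards [hUopen.mem_nhds hz₀] with z hz using key z hz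
  have hder : HasDerivAt (fun z => Complex.exp (d * z + e))
      (Complex.exp (d * z₀ + e) * d) z₀ := by
    have h1 : HasDerivAt (fun z : ℂ => d * z + e) d z₀ := by
      simpa using ((hasDerivAt_id z₀).const_mul d).add_const e
    exact (Complex.hasDerivAt_exp (d * z₀ + e)).comp z₀ h1
  have hdz : deriv (fun z => Complex.exp (d * z + e)) z₀ = 0 := by
    rw [hev.deriv_eq]; simp
  rw [hder.deriv] at hdz
  have hdzero : d = 0 := by
    rcases mul_eq_zero.mp hdz with h | h
    · exact absurd h (Complex.exp_ne_zero _)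
    · exact h
  have : γ (l + l') - γ l - γ l' = 0 := hdzero
  linear_combination this
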